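/- Every finite tree (a connected acyclic simple graph) containing a vertex of degree 3 or more contains at least one split vertex, i.e., a vertex of degree at least 3 that has at least two tails. -/

import Mathlib

namespace SimpleGraph
namespace Walk

variable {V : Type*} {G : SimpleGraph V}

/-- Prefix of a walk up to index `n`. -/
def takeW : ∀ {u v : V} (p : G.Walk u v) (n : ℕ), G.Walk u (p.getVert n)
  | _, _, p, 0 => (Walk.nil).copy rfl p.getVert_zero.symm
  | _, _, Walk.nil, _ + 1 => Walk.nil
  | _, _, Walk.cons h p, n + 1 => Walk.cons h (p.takeW n)

lemma takeW_length : ∀ {u v : V} (p : G.Walk u v) (n : ℕ), n ≤ p.length →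
    (p.takeW n).length = n
  | _, _, p, 0, _ => by simp [takeW]
  | _, _, Walk.nil, n + 1, h => by simp at h
  | _, _, Walk.cons h p, n + 1, hn => by
      simpa [takeW] using takeW_length p n (by simpa using hn)

lemma takeW_getVert : ∀ {u v : V} (p : G.Walk u v) {n i : ℕ}, i ≤ n →
    (p.takeW n).getVert i = p.getVert i
  | _, _, p, 0, i, hi => by
      obtain rfl : i = 0 := Nat.le_zero.mp hi
      simp [takeW]
  | _, _, Walk.nil, n + 1, i, hi => by
      simp [takeW, getVert_of_length_le]
  | _, _, Walk.cons h p, n + 1, 0, _ => by simp [takeW]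
  | _, _, Walk.cons h p, n + 1, i + 1, hi => by
      simpa [takeW] using takeW_getVert p (n := n) (i := i) (by omega)

lemma takeW_support_subset : ∀ {u v : V} (p : G.Walk u v) (n : ℕ),
    (p.takeW n).support ⊆ p.support
  | _, _, p, 0 => by
      simp [takeW]
  | _, _, Walk.nil, _ + 1 => by simp [takeW]
  | _, _, Walk.cons h p, n + 1 => by
      simp only [takeW, support_cons]
      exact List.cons_subset_cons _ (takeW_support_subset p n)

protected lemma IsPath.takeW : ∀ {u v : V} {p : G.Walk u v}, p.IsPath → ∀ (n : ℕ),
    (p.takeW n).IsPath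
  | _, _, p, _, 0 => by
      simp only [takeW, isPath_copy]
      exact IsPath.nil
  | _, _, Walk.nil, _, _ + 1 => IsPath.nil
  | _, _, Walk.cons h p, hp, n + 1 => by
      rw [cons_isPath_iff] at hp
      exact (hp.1.takeW n).cons fun hmem => hp.2 (takeW_support_subset p n hmem)

lemma isPath_concat {u v w : V} {p : G.Walk u v} (hp : p.IsPath) (h : G.Adj v w)
    (hw : w ∉ p.support) : (p.concat h).IsPath := by
  rw [← isPath_reverse_iff, reverse_concat, cons_isPath_iff]
  refine ⟨hp.reverse, ?_⟩
  simpa using hw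

lemma getVert_concat_of_le {u v w : V} (p : G.Walk u v) (h : G.Adj v w) {i : ℕ}
    (hi : i ≤ p.length) : (p.concat h).getVert i = p.getVert i := by
  rw [concat_eq_append, getVert_append]
  split_ifs with h'
  · rfl
  · obtain rfl : i = p.length := le_antisymm hi (not_lt.mp h')
    simp

end Walk

open Walk

variable {V : Type*}

/-- Any two walks between the same endpoints of a tree that are paths are equal. -/
lemma IsTree.path_unique' {G : SimpleGraph V} (htree : G.IsTree) {a b : V}
    {p q : G.Walk a b} (hp : p.IsPath) (hq : q.IsPath) : p = q :=
  (htree.existsUnique_path a b).unique hp hq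

end SimpleGraph

open SimpleGraph Walk

/-- `IsTailThrough G v₀ v₁` says that `v₀` has a tail whose first vertex is `v₁`:
there is a path `(v₀, v₁, …, v_k)` of distinct vertices, `k ≥ 1`, with consecutive
vertices adjacent, `deg v₀ ≥ 3`, `deg v_k = 1`, and `deg v_i = 2` for `0 < i < k`. -/
def IsTailThrough {V : Type*} [Fintype V] (G : SimpleGraph V) [DecidableRel G.Adj]
    (v₀ v₁ : V) : Prop :=
  ∃ (k : ℕ) (w : ℕ → V), 1 ≤ k ∧ w 0 = v₀ ∧ w 1 = v₁ ∧
    (∀ i, i < k → G.Adj (w i) (w (i + 1))) ∧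
    (∀ i j, i ≤ k → j ≤ k → w i = w j → i = j) ∧
    3 ≤ G.degree v₀ ∧ G.degree (w k) = 1 ∧
    (∀ i, 0 < i → i < k → G.degree (w i) = 2)

/-- A split vertex: a vertex of degree at least 3 having at least two tails
(two tails with distinct first vertices). -/
def IsSplitVertex {V : Type*} [Fintype V] (G : SimpleGraph V) [DecidableRel G.Adj]
    (s : V) : Prop :=
  3 ≤ G.degree s ∧
    ∃ u₁ u₂ : V, u₁ ≠ u₂ ∧ IsTailThrough G s u₁ ∧ IsTailThrough G s u₂

/-- The key construction: if `s` is a branch vertex which maximizes the distance from a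
fixed base vertex `v` among branch vertices, and `u` is a neighbor of `s` not on the
path from `v` to `s`, then `s` has a tail through `u`. -/
lemma tail_through_aux {V : Type*} [Fintype V] (G : SimpleGraph V) [DecidableRel G.Adj]
    (htree : G.IsTree) (v s u : V) (f : V → ℕ)
    (hf : ∀ (x : V) (q : G.Walk v x), q.IsPath → q.length = f x)
    (hdeg : 3 ≤ G.degree s) (hmax : ∀ b, 3 ≤ G.degree b → f b ≤ f s)
    (p₀ : G.Walk v s) (hp₀ : p₀.IsPath) (hadj : G.Adj s u) (hu : u ∉ p₀.support) :
    IsTailThrough G s u := by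
  classical
  set n₀ := p₀.length with hn₀
  have hfs : f s = n₀ := (hf s p₀ hp₀).symm
  -- the set of lengths of paths from `v` through `s` then `u`
  set S : Set ℕ := {n : ℕ | ∃ (z : V) (q : G.Walk v z), q.IsPath ∧ q.length = n ∧
    n₀ + 1 ≤ n ∧ q.getVert n₀ = s ∧ q.getVert (n₀ + 1) = u} with hS
  have hmem : n₀ + 1 ∈ S := by
    refine ⟨u, p₀.concat hadj, isPath_concat hp₀ hadj hu, by simp [length_concat, hn₀], le_rfl, ?_, ?_⟩
    · rw [getVert_concat_of_le _ _ le_rfl]; simp [hn₀]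
    · rw [concat_eq_append, getVert_append]
      simp [hn₀]
  have hbdd : BddAbove S := by
    refine ⟨Fintype.card V, fun n hn => ?_⟩
    obtain ⟨z, q, hq, rfl, -⟩ := hn
    exact hq.length_lt.le
  have hkS : sSup S ∈ S := Nat.sSup_mem ⟨n₀ + 1, hmem⟩ hbdd
  obtain ⟨z, q, hq, hlen, hk1, hks, hku⟩ := hkS
  set k := sSup S with hkdef
  -- positions are determined: `f (q.getVert i) = i`
  have hfi : ∀ i, i ≤ k → f (q.getVert i) = i := by
    intro i hi
    rw [← hf _ (q.takeW i) (hq.takeW i), takeW_length q i (by omega)]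
  have hinj : ∀ i j, i ≤ k → j ≤ k → q.getVert i = q.getVert j → i = j := by
    intro i j hi hj hij
    have := hfi i hi
    rw [hij, hfi j hj] at this
    omega
  have hz : q.getVert k = z := by
    rw [← hlen]; exact q.getVert_length
  -- every neighbor of the endpoint `z` is the penultimate vertex
  have hnbr : ∀ y, G.Adj z y → y = q.getVert (k - 1) := by
    intro y hy
    have hymem : y ∈ q.support := by
      by_contra hym
      have hpath : (q.concat hy).IsPath := isPath_concat hq hy hym
      have : k + 1 ∈ S := by
        refine ⟨y, q.concat hy, hpath, by simp [length_concat, hlen], by omega, ?_, ?_⟩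
        · rw [getVert_concat_of_le _ _ (by omega)]; exact hks
        · rw [getVert_concat_of_le _ _ (by omega)]; exact hku
      have := le_csSup hbdd this
      omega
    obtain ⟨m, hm, hmle⟩ := (Walk.mem_support_iff_exists_getVert).mp hymem
    rw [hlen] at hmle
    have hyz : y ≠ z := fun h => G.irrefl (h ▸ hy)
    have hmk : m ≠ k := fun h => hyz (by rw [← hm, h, hz])
    by_contra hne
    have hmk1 : m ≠ k - 1 := fun h => hne (by rw [← hm, h])
    -- the tail of `q` from `y` has length `k - m ≥ 2`, but uniqueness forces length 1
    have htk : (q.takeUntil y hymem).length = m := by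
      have := hf y (q.takeUntil y hymem) (hq.takeUntil hymem)
      rw [this, ← hm, hfi m (by omega)]
    have hdrop : (q.dropUntil y hymem).length = k - m := by
      have hspec := congrArg Walk.length (q.take_spec hymem)
      rw [length_append, htk, hlen] at hspec
      omega
    have hedge : (Walk.cons hy.symm Walk.nil : G.Walk y z).IsPath := by
      rw [cons_isPath_iff]
      exact ⟨IsPath.nil, by simpa using hyz⟩
    have := htree.path_unique' (hq.dropUntil hymem) hedge
    have hlen1 := congrArg Walk.length this
    simp only [hdrop, length_cons, length_nil] at hlen1
    omega
  have hdegz : G.degree z = 1 := by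
    have hadjz : G.Adj (q.getVert (k - 1)) z := by
      have := q.adj_getVert_succ (i := k - 1) (by omega)
      rwa [show k - 1 + 1 = k by omega, hz] at this
    have : G.neighborFinset z = {q.getVert (k - 1)} := by
      ext y
      simp only [mem_neighborFinset, Finset.mem_singleton]
      exact ⟨fun h => hnbr y h, fun h => h ▸ hadjz.symm⟩
    rw [← card_neighborFinset_eq_degree, this, Finset.card_singleton]
  -- assemble the tail
  refine ⟨k - n₀, fun i => q.getVert (n₀ + i), by omega, by simp [hks], ?_, ?_, ?_, hdeg, ?_, ?_⟩
  · show q.getVert (n₀ + 1) = u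
    exact hku
  · intro i hi
    show G.Adj (q.getVert (n₀ + i)) (q.getVert (n₀ + (i + 1)))
    have := q.adj_getVert_succ (i := n₀ + i) (by omega)
    rwa [show n₀ + i + 1 = n₀ + (i + 1) by omega] at this
  · intro i j hi hj hij
    simp only at hij
    have := hinj (n₀ + i) (n₀ + j) (by omega) (by omega) hij
    omega
  · show G.degree (q.getVert (n₀ + (k - n₀))) = 1
    rw [show n₀ + (k - n₀) = k by omega, hz]; exact hdegz
  · intro i hi0 hik
    show G.degree (q.getVert (n₀ + i)) = 2
    have h2le : 2 ≤ G.degree (q.getVert (n₀ + i)) := by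
      have ha : G.Adj (q.getVert (n₀ + i)) (q.getVert (n₀ + i - 1)) := by
        have := q.adj_getVert_succ (i := n₀ + i - 1) (by omega)
        rw [show n₀ + i - 1 + 1 = n₀ + i by omega] at this
        exact this.symm
      have hb : G.Adj (q.getVert (n₀ + i)) (q.getVert (n₀ + i + 1)) :=
        q.adj_getVert_succ (by omega)
      have hne : q.getVert (n₀ + i - 1) ≠ q.getVert (n₀ + i + 1) := by
        intro h
        have := hinj (n₀ + i - 1) (n₀ + i + 1) (by omega) (by omega) h
        omega
      have hsub : ({q.getVert (n₀ + i - 1), q.getVert (n₀ + i + 1)} : Finset V) ⊆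
          G.neighborFinset (q.getVert (n₀ + i)) := by
        intro y hy
        simp only [Finset.mem_insert, Finset.mem_singleton] at hy
        rcases hy with rfl | rfl
        · exact (mem_neighborFinset _ _ _).mpr ha
        · exact (mem_neighborFinset _ _ _).mpr hb
      calc 2 = ({q.getVert (n₀ + i - 1), q.getVert (n₀ + i + 1)} : Finset V).card :=
              (Finset.card_pair hne).symm
        _ ≤ (G.neighborFinset (q.getVert (n₀ + i))).card := Finset.card_le_card hsub
        _ = G.degree (q.getVert (n₀ + i)) := card_neighborFinset_eq_degree _ _
    have h2ge : G.degree (q.getVert (n₀ + i)) ≤ 2 := by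
      by_contra h
      have h3 : 3 ≤ G.degree (q.getVert (n₀ + i)) := by omega
      have := hmax _ h3
      rw [hfi (n₀ + i) (by omega), hfs] at this
      omega
    omega

/-- Every finite tree containing a vertex of degree 3 or more has at least one split
vertex. -/
theorem tree_has_split_vertex {V : Type*} [Fintype V] (G : SimpleGraph V)
    [DecidableRel G.Adj] (htree : G.IsTree) (v : V) (hv : 3 ≤ G.degree v) :
    ∃ s : V, IsSplitVertex G s := by
  classical
  set f : V → ℕ := fun x => (htree.existsUnique_path v x).choose.length with hfdef
  have hf : ∀ (x : V) (q : G.Walk v x), q.IsPath → q.length = f x := by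
    intro x q hq
    have := (htree.existsUnique_path v x).choose_spec
    exact congrArg Walk.length (this.2 q hq)
  obtain ⟨s, hs_mem, hs_max⟩ := Finset.exists_max_image
    (Finset.univ.filter fun x => 3 ≤ G.degree x) f ⟨v, by simp [hv]⟩
  have hdeg : 3 ≤ G.degree s := by simpa using hs_mem
  have hmax : ∀ b, 3 ≤ G.degree b → f b ≤ f s := fun b hb => hs_max b (by simp [hb])
  set p₀ : G.Walk v s := (htree.existsUnique_path v s).choose with hp₀def
  have hp₀ : p₀.IsPath := (htree.existsUnique_path v s).choose_spec.1
  set n₀ := p₀.length with hn₀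
  have hfi₀ : ∀ i, i ≤ n₀ → f (p₀.getVert i) = i := by
    intro i hi
    rw [← hf _ (p₀.takeW i) (hp₀.takeW i), takeW_length p₀ i hi]
  -- neighbors of `s` lying on `p₀` are all equal to the penultimate vertex of `p₀`
  have hpen : ∀ y, G.Adj s y → y ∈ p₀.support → y = p₀.getVert (n₀ - 1) := by
    intro y hy hymem
    obtain ⟨m, hm, hmle⟩ := (Walk.mem_support_iff_exists_getVert).mp hymem
    have hsnot : s ∉ (p₀.takeW m).support := by
      intro hs'
      obtain ⟨j, hj, hjle⟩ := (Walk.mem_support_iff_exists_getVert).mp hs'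
      rw [takeW_length p₀ m hmle] at hjle
      rw [takeW_getVert p₀ hjle] at hj
      have hj' : f (p₀.getVert j) = j := hfi₀ j (by omega)
      rw [hj] at hj'
      have hn : f s = n₀ := (hf s p₀ hp₀).symm
      have hjn : j = n₀ := by omega
      have : y = s := by
        rw [← hm]
        have : m = n₀ := by omega
        rw [this, p₀.getVert_length]
      exact G.irrefl (this ▸ hy)
    have hadj' : G.Adj (p₀.getVert m) s := hm ▸ hy.symm
    have hpath : ((p₀.takeW m).concat hadj').IsPath :=
      isPath_concat (hp₀.takeW m) hadj' hsnot
    have := htree.path_unique' hpath hp₀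
    have hlen := congrArg Walk.length this
    rw [length_concat, takeW_length p₀ m hmle] at hlen
    rw [← hm]
    congr 1
    omega
  -- find two distinct neighbors of `s` avoiding `p₀`
  have hcard : 1 < ((G.neighborFinset s).filter (fun y => y ∉ p₀.support)).card := by
    have hsplit := Finset.card_filter_add_card_filter_not
      (s := G.neighborFinset s) (p := fun y => y ∈ p₀.support)
    have hbad : ((G.neighborFinset s).filter (fun y => y ∈ p₀.support)).card ≤ 1 := by
      refine Finset.card_le_one.mpr ?_
      intro a ha b hb
      simp only [Finset.mem_filter, mem_neighborFinset] at ha hb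
      rw [hpen a ha.1 ha.2, hpen b hb.1 hb.2]
    have hdeg' : 3 ≤ (G.neighborFinset s).card := by
      rwa [card_neighborFinset_eq_degree]
    omega
  obtain ⟨u₁, hu₁, u₂, hu₂, hne⟩ := Finset.one_lt_card.mp hcard
  simp only [Finset.mem_filter, mem_neighborFinset] at hu₁ hu₂
  exact ⟨s, hdeg, u₁, u₂, hne,
    tail_through_aux G htree v s u₁ f hf hdeg hmax p₀ hp₀ hu₁.1 hu₁.2,
    tail_through_aux G htree v s u₂ f hf hdeg hmax p₀ hp₀ hu₂.1 hu₂.2⟩
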